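/- Let A be the ring of integers in a finite extension K of ℚ_p and H a finite A-algebra (commutative). For every x ∈ H, the sequence x^{m!} converges in H (with the p-adic topology) to an idempotent e_x, and for every finite H-module M, e_x M is the largest H-submodule of M on which multiplication by x is bijective. -/

import Mathlib

open Filter

/-- Power stabilization in a monoid. -/
lemma auxPowStab {M : Type*} [Monoid M] (a : M) {i d : ℕ} (hd : 0 < d)
    (h : a ^ i = a ^ (i + d)) {k l : ℕ} (hik : i ≤ k) (hkl : k ≤ l) (hdvd : d ∣ l - k) :
    a ^ k = a ^ l := by
  have step : ∀ k, i ≤ k → a ^ k = a ^ (k + d) := by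
    intro k hk
    obtain ⟨t, rfl⟩ := Nat.exists_eq_add_of_le hk
    calc a ^ (i + t) = a ^ i * a ^ t := pow_add a i t
      _ = a ^ (i + d) * a ^ t := by rw [h]
      _ = a ^ (i + t + d) := by rw [← pow_add]; ring_nf
  obtain ⟨t, ht⟩ := hdvd
  have hl : l = k + d * t := by omega
  subst hl
  clear ht hkl
  induction t with
  | zero => simp
  | succ t ih =>
    have : k + d * (t + 1) = (k + d * t) + d := by ring
    rw [this, ← step (k + d * t) (le_trans hik (Nat.le_add_right _ _)), ih]

lemma auxMemSmulTopPi {R : Type*} [CommRing R] (J : Ideal R) {k : ℕ} (v : Fin k → R) :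
    v ∈ (J • ⊤ : Submodule R (Fin k → R)) ↔ ∀ i, v i ∈ J := by
  constructor
  · intro hv i
    refine Submodule.smul_induction_on hv (fun r hr m _ => ?_) (fun a b ha hb => ?_)
    · simpa using J.mul_mem_right (m i) hr
    · exact J.add_mem ha hb
  · intro h
    have hv : v = ∑ i, Pi.single i (v i) := (Finset.univ_sum_single v).symm
    rw [hv]
    refine Submodule.sum_mem _ fun i _ => ?_
    have : Pi.single i (v i) = (v i) • (Pi.single i (1 : R) : Fin k → R) := by
      ext j
      by_cases hij : j = i <;> simp [Pi.single_apply, hij]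
    rw [this]
    exact Submodule.smul_mem_smul (h i) trivial

lemma auxSmulTopSelf {R : Type*} [CommRing R] (J : Ideal R) :
    (J • ⊤ : Submodule R R) = J := by
  rw [smul_eq_mul, Ideal.mul_top]

lemma auxIsPrecompletePi {R : Type*} [CommRing R] (I : Ideal R) [IsPrecomplete I R] (k : ℕ) :
    IsPrecomplete I (Fin k → R) := by
  constructor
  intro f hf
  have comp : ∀ i : Fin k, ∃ L : R, ∀ n, f n i ≡ L [SMOD (I ^ n • ⊤ : Submodule R R)] := by
    intro i
    apply IsPrecomplete.prec ‹IsPrecomplete I R›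
    intro m n hmn
    have := hf hmn
    rw [SModEq.sub_mem] at this ⊢
    rw [auxSmulTopSelf]
    exact (auxMemSmulTopPi _ _).1 this i
  choose L hL using comp
  refine ⟨L, fun n => ?_⟩
  rw [SModEq.sub_mem, auxMemSmulTopPi]
  intro i
  have := hL i n
  rw [SModEq.sub_mem, auxSmulTopSelf] at this
  exact this

lemma auxIsPrecompleteOfSurjective {R : Type*} [CommRing R] (I : Ideal R)
    {M N : Type*} [AddCommGroup M] [Module R M] [AddCommGroup N] [Module R N]
    [IsPrecomplete I M] (f : M →ₗ[R] N) (hf : Function.Surjective f) :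
    IsPrecomplete I N := by
  have key : ∀ n (y : N), y ∈ (I ^ n • ⊤ : Submodule R N) →
      ∃ c : M, c ∈ (I ^ n • ⊤ : Submodule R M) ∧ f c = y := by
    intro n y hy
    have heq : (I ^ n • ⊤ : Submodule R N) = Submodule.map f (I ^ n • ⊤) := by
      rw [Submodule.map_smul'', Submodule.map_top, LinearMap.range_eq_top.mpr hf]
    rw [heq] at hy
    obtain ⟨c, hc, rfl⟩ := hy
    exact ⟨c, hc, rfl⟩
  constructor
  intro g hg
  obtain ⟨h0, hh0⟩ := hf (g 0)
  have hc : ∀ n : ℕ, ∃ c : M, c ∈ (I ^ n • ⊤ : Submodule R M) ∧ f c = g (n + 1) - g n := by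
    intro n
    apply key
    have := hg (Nat.le_succ n)
    rw [SModEq.sub_mem] at this
    simpa using Submodule.neg_mem _ this
  choose c hcmem hcval using hc
  set h : ℕ → M := fun n => h0 + ∑ j ∈ Finset.range n, c j with hdef
  have hfh : ∀ n, f (h n) = g n := by
    intro n
    simp only [hdef, map_add, map_sum, hcval, hh0]
    rw [Finset.sum_range_sub (fun j => g j)]
    abel
  have hcauchy : ∀ {m n : ℕ}, m ≤ n → h m ≡ h n [SMOD (I ^ m • ⊤ : Submodule R M)] := by
    intro m n hmn
    rw [SModEq.sub_mem]
    have : h m - h n = -∑ j ∈ Finset.Ico m n, c j := by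
      simp only [hdef]
      rw [← Finset.sum_range_add_sum_Ico _ hmn]
      abel
    rw [this]
    refine Submodule.neg_mem _ (Submodule.sum_mem _ fun j hj => ?_)
    rw [Finset.mem_Ico] at hj
    exact Submodule.smul_mono_left (Ideal.pow_le_pow_right hj.1) (hcmem j)
  obtain ⟨L, hL⟩ := IsPrecomplete.prec ‹IsPrecomplete I M› @hcauchy
  refine ⟨f L, fun n => ?_⟩
  rw [SModEq.sub_mem]
  have := hL n
  rw [SModEq.sub_mem] at this
  have : f (h n - L) ∈ Submodule.map f (I ^ n • ⊤ : Submodule R M) :=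
    Submodule.mem_map_of_mem this
  rw [Submodule.map_smul'', Submodule.map_top] at this
  rw [show g n - f L = f (h n - L) by rw [map_sub, hfh]]
  exact Submodule.smul_mono_left (le_refl _) (Submodule.smul_mono le_rfl le_top this)

lemma auxMemEquiv (p : ℕ) [Fact p.Prime] (H : Type*) [CommRing H] [Algebra ℤ_[p] H]
    (n : ℕ) (y : H) :
    y ∈ ((Ideal.span {(p : ℤ_[p])}) ^ n • ⊤ : Submodule ℤ_[p] H) ↔
      y ∈ Ideal.span {(p : H) ^ n} := by
  have halg : algebraMap ℤ_[p] H ((p : ℤ_[p]) ^ n) = (p : H) ^ n := by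
    rw [map_pow, map_natCast]
  rw [Ideal.span_singleton_pow]
  constructor
  · intro hy
    refine Submodule.smul_induction_on hy (fun r hr m _ => ?_) (fun a b ha hb => Ideal.add_mem _ ha hb)
    obtain ⟨d, hd⟩ := Ideal.mem_span_singleton'.1 hr
    rw [Algebra.smul_def, ← hd, map_mul, halg]
    exact Ideal.mul_mem_right _ _ (Ideal.mul_mem_left _ _ (Ideal.mem_span_singleton_self _))
  · intro hy
    obtain ⟨a, ha⟩ := Ideal.mem_span_singleton'.1 hy
    have : y = ((p : ℤ_[p]) ^ n) • a := by
      rw [Algebra.smul_def, halg, ← ha, mul_comm]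
    rw [this]
    exact Submodule.smul_mem_smul (Ideal.mem_span_singleton_self _) trivial

lemma auxSep (p : ℕ) [Fact p.Prime] (M : Type) [AddCommGroup M] [Module ℤ_[p] M]
    [Module.Finite ℤ_[p] M] (v : M)
    (hv : ∀ n : ℕ, v ∈ ((Ideal.span {(p : ℤ_[p])}) ^ n • ⊤ : Submodule ℤ_[p] M)) : v = 0 := by
  have hne : (Ideal.span {(p : ℤ_[p])} : Ideal ℤ_[p]) ≠ ⊤ := by
    rw [← PadicInt.maximalIdeal_eq_span_p]
    exact (IsLocalRing.maximalIdeal.isMaximal _).ne_top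
  have := Ideal.iInf_pow_smul_eq_bot_of_isLocalRing (R := ℤ_[p]) (M := M)
    (I := Ideal.span {(p : ℤ_[p])}) hne
  have hmem : v ∈ (⨅ i : ℕ, (Ideal.span {(p : ℤ_[p])}) ^ i • ⊤ : Submodule ℤ_[p] M) :=
    Submodule.mem_iInf _ |>.2 hv
  rw [this] at hmem
  simpa using hmem

lemma auxFiniteQuotient (p : ℕ) [Fact p.Prime] (H : Type*) [CommRing H] [Algebra ℤ_[p] H]
    [Module.Finite ℤ_[p] H] (n : ℕ) :
    Finite (H ⧸ Ideal.span {(p : H) ^ n}) := by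
  haveI : NeZero (p ^ n) := ⟨pow_ne_zero n (Fact.out : p.Prime).ne_zero⟩
  obtain ⟨s, hs⟩ := Module.Finite.fg_top (R := ℤ_[p]) (M := H)
  set I : Ideal H := Ideal.span {(p : H) ^ n}
  set π := Ideal.Quotient.mk I
  have halg : algebraMap ℤ_[p] H ((p : ℤ_[p]) ^ n) = (p : H) ^ n := by
    rw [map_pow, map_natCast]
  have key : ∀ c : ℤ_[p], c ∈ RingHom.ker (PadicInt.toZModPow n) → ∀ h : H, π (c • h) = 0 := by
    intro c hc h
    rw [PadicInt.ker_toZModPow] at hc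
    obtain ⟨d, hd⟩ := Ideal.mem_span_singleton'.1 hc
    rw [Ideal.Quotient.eq_zero_iff_mem, Algebra.smul_def, ← hd, map_mul, halg]
    exact Ideal.mul_mem_right _ _ (Ideal.mul_mem_left _ _ (Ideal.mem_span_singleton_self _))
  set F : (s → ZMod (p ^ n)) → H ⧸ I := fun a =>
    π (∑ g ∈ s.attach, (((a g).val : ℤ_[p]) • (g : H)))
  have hF : Function.Surjective F := by
    intro z
    obtain ⟨h, rfl⟩ := Ideal.Quotient.mk_surjective z
    have hh : h ∈ Submodule.span ℤ_[p] (↑s : Set H) := by rw [hs]; trivial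
    obtain ⟨f, -, hf⟩ := Submodule.mem_span_finset.1 hh
    refine ⟨fun g => PadicInt.toZModPow n (f (g : H)), ?_⟩
    show π (∑ g ∈ s.attach, _) = π h
    rw [← hf, ← Finset.sum_attach s (fun g => f g • g)]
    rw [← sub_eq_zero, ← map_sub, ← Finset.sum_sub_distrib]
    rw [show (0 : H ⧸ I) = π 0 from rfl]
    rw [map_sum]
    rw [map_zero]
    refine Finset.sum_eq_zero fun g _ => ?_
    rw [← sub_smul]
    apply key
    rw [RingHom.mem_ker, map_sub]
    have : PadicInt.toZModPow n (((((PadicInt.toZModPow n) (f (g : H))).val : ℕ) : ℤ_[p])) =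
        PadicInt.toZModPow n (f (g : H)) := by
      rw [map_natCast, ZMod.natCast_val, ZMod.cast_id]
    rw [this, sub_self]
  exact Finite.of_surjective F hF

lemma auxSep' (p : ℕ) [Fact p.Prime] (M : Type*) [AddCommGroup M] [Module ℤ_[p] M]
    [Module.Finite ℤ_[p] M] (v : M)
    (hv : ∀ n : ℕ, v ∈ ((Ideal.span {(p : ℤ_[p])}) ^ n • ⊤ : Submodule ℤ_[p] M)) : v = 0 := by
  obtain ⟨k, φ, hφ⟩ := Module.Finite.exists_fin' ℤ_[p] M
  set M₀ := (Fin k → ℤ_[p]) ⧸ (LinearMap.ker φ)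
  have : Module.Finite ℤ_[p] M₀ := Module.Finite.quotient _ _
  set ψ : M₀ ≃ₗ[ℤ_[p]] M := φ.quotKerEquivOfSurjective hφ
  have hmem : ∀ n : ℕ, ψ.symm v ∈ ((Ideal.span {(p : ℤ_[p])}) ^ n • ⊤ : Submodule ℤ_[p] M₀) := by
    intro n
    have : ψ.symm v ∈ Submodule.map (ψ.symm : M →ₗ[ℤ_[p]] M₀)
        ((Ideal.span {(p : ℤ_[p])}) ^ n • ⊤ : Submodule ℤ_[p] M) :=
      Submodule.mem_map_of_mem (hv n)
    rw [Submodule.map_smul'', Submodule.map_top] at this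
    rwa [LinearEquiv.range] at this
  have := auxSep p M₀ (ψ.symm v) hmem
  have h2 := congrArg ψ this
  simpa using h2

theorem mainAux (p : ℕ) [Fact p.Prime] (H : Type*) [CommRing H] [Algebra ℤ_[p] H]
    [Module.Finite ℤ_[p] H] (x : H) :
    ∃ e : H, IsIdempotentElem e ∧
      (∀ n : ℕ, ∀ᶠ m in atTop, x ^ (Nat.factorial m) - e ∈ Ideal.span {(p : H) ^ n}) ∧
      ∀ (M : Type) (_ : AddCommGroup M) (_ : Module H M) (_ : Module.Finite H M),
        IsGreatest
          {N : Submodule H M |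
            Function.Bijective fun v : N => (⟨x • (v : M), N.smul_mem x v.2⟩ : N)}
          (LinearMap.range (LinearMap.lsmul H M e)) := by
  set I : ℕ → Ideal H := fun n => Ideal.span {(p : H) ^ n} with hIdef
  have stab : ∀ n : ℕ, ∃ c : ℕ, ∀ l : ℕ, c.factorial ≤ l → c.factorial ∣ l →
      x ^ l - x ^ c.factorial ∈ I n := by
    intro n
    haveI := auxFiniteQuotient p H n
    set π := Ideal.Quotient.mk (I n) with hπ
    obtain ⟨a, b, hab, heq⟩ := Finite.exists_ne_map_eq_of_infinite (fun t : ℕ => (π x) ^ t)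
    obtain ⟨i, j, hij, he⟩ : ∃ i j : ℕ, i < j ∧ (π x) ^ i = (π x) ^ j := by
      rcases Nat.lt_or_ge a b with h | h
      · exact ⟨a, b, h, heq⟩
      · exact ⟨b, a, lt_of_le_of_ne h (Ne.symm hab), heq.symm⟩
    set d := j - i with hd'
    have hd : 0 < d := by omega
    have hij' : (π x) ^ i = (π x) ^ (i + d) := by rw [show i + d = j by omega]; exact he
    refine ⟨max i d, fun l hl hdvd => ?_⟩
    have h1 : i ≤ (max i d).factorial := le_trans (le_max_left i d) (Nat.self_le_factorial _)
    have h2 : d ∣ (max i d).factorial := Nat.dvd_factorial hd (le_max_right i d)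
    have key : (π x) ^ (max i d).factorial = (π x) ^ l :=
      auxPowStab (π x) hd hij' h1 hl (Nat.dvd_sub (dvd_trans h2 hdvd) h2)
    have hz : π (x ^ l - x ^ (max i d).factorial) = 0 := by
      rw [map_sub, map_pow, map_pow, ← key, sub_self]
    rwa [hπ, Ideal.Quotient.eq_zero_iff_mem] at hz
  choose c hc using stab
  set B : ℕ → ℕ := fun n => Nat.rec (c 0) (fun k ih => max (c (k + 1)) ih) n with hB
  have hBm : Monotone B := monotone_nat_of_le_succ (fun n => le_max_right _ _)
  have hcB : ∀ n, c n ≤ B n := by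
    intro n
    cases n with
    | zero => exact le_refl _
    | succ k => exact le_max_left _ _
  have hkey : ∀ n m : ℕ, B n ≤ m → x ^ m.factorial - x ^ (B n).factorial ∈ I n := by
    intro n m hm
    have hcm : c n ≤ m := le_trans (hcB n) hm
    have h1 := hc n m.factorial (Nat.factorial_le hcm) (Nat.factorial_dvd_factorial hcm)
    have h2 := hc n (B n).factorial (Nat.factorial_le (hcB n))
      (Nat.factorial_dvd_factorial (hcB n))
    have h3 := Ideal.sub_mem _ h1 h2
    rwa [sub_sub_sub_cancel_right] at h3
  haveI : IsPrecomplete (Ideal.span {(p : ℤ_[p])}) ℤ_[p] := by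
    rw [← PadicInt.maximalIdeal_eq_span_p]; infer_instance
  obtain ⟨k, φ, hφ⟩ := Module.Finite.exists_fin' ℤ_[p] H
  haveI : IsPrecomplete (Ideal.span {(p : ℤ_[p])}) (Fin k → ℤ_[p]) := auxIsPrecompletePi _ k
  haveI : IsPrecomplete (Ideal.span {(p : ℤ_[p])}) H := auxIsPrecompleteOfSurjective _ φ hφ
  set f : ℕ → H := fun n => x ^ (B n).factorial with hf
  have hcauchy : ∀ {m n : ℕ}, m ≤ n →
      f m ≡ f n [SMOD ((Ideal.span {(p : ℤ_[p])}) ^ m • ⊤ : Submodule ℤ_[p] H)] := by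
    intro m n hmn
    rw [SModEq.sub_mem, auxMemEquiv]
    have := neg_mem (hkey m (B n) (hBm hmn))
    rwa [neg_sub] at this
  obtain ⟨e, he⟩ := IsPrecomplete.prec ‹IsPrecomplete _ H› @hcauchy
  have heI : ∀ n, x ^ (B n).factorial - e ∈ I n := by
    intro n
    have := he n
    rw [SModEq.sub_mem, auxMemEquiv] at this
    exact this
  have hconv : ∀ n m, B n ≤ m → x ^ m.factorial - e ∈ I n := by
    intro n m hm
    have := Ideal.add_mem _ (hkey n m hm) (heI n)
    rwa [sub_add_sub_cancel] at this
  have he2 : e * e = e := by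
    have hmem : ∀ n, e * e - e ∈ I n := by
      intro n
      set g := x ^ (B n).factorial with hg
      have h1 : g - e ∈ I n := heI n
      have h2 : g * g - g ∈ I n := by
        have hA := hc n ((B n).factorial + (B n).factorial)
          (le_trans (Nat.factorial_le (hcB n)) (Nat.le_add_right _ _))
          (dvd_add (Nat.factorial_dvd_factorial (hcB n)) (Nat.factorial_dvd_factorial (hcB n)))
        have hB2 := hc n (B n).factorial (Nat.factorial_le (hcB n))
          (Nat.factorial_dvd_factorial (hcB n))
        have h3 := Ideal.sub_mem _ hA hB2
        rw [sub_sub_sub_cancel_right] at h3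
        rwa [hg, ← pow_add]
      have hid : e * e - e = (e - g) * (e + g) + (g * g - g) + (g - e) := by ring
      rw [hid]
      refine Ideal.add_mem _ (Ideal.add_mem _ ?_ h2) h1
      have := neg_mem h1
      rw [neg_sub] at this
      exact Ideal.mul_mem_right _ _ this
    apply sub_eq_zero.1
    apply auxSep' p H
    intro n
    rw [auxMemEquiv]
    exact hmem n
  have pjac : (p : H) ∈ Ideal.jacobson (⊥ : Ideal H) := by
    rw [Ideal.jacobson]
    refine Submodule.mem_sInf.2 ?_
    rintro J ⟨-, hJ⟩
    haveI : Algebra.IsIntegral ℤ_[p] H := Algebra.IsIntegral.of_finite _ _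
    haveI := hJ
    have hmax : (Ideal.comap (algebraMap ℤ_[p] H) J).IsMaximal :=
      Ideal.isMaximal_comap_of_isIntegral_of_isMaximal J
    have hcomap : Ideal.comap (algebraMap ℤ_[p] H) J = IsLocalRing.maximalIdeal ℤ_[p] :=
      IsLocalRing.eq_maximalIdeal hmax
    have hp : (p : ℤ_[p]) ∈ Ideal.comap (algebraMap ℤ_[p] H) J := by
      rw [hcomap, PadicInt.maximalIdeal_eq_span_p]
      exact Ideal.mem_span_singleton_self _
    rw [Ideal.mem_comap] at hp
    have halgp : (algebraMap ℤ_[p] H) ((p : ℕ) : ℤ_[p]) = (p : H) := map_natCast _ p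
    rwa [halgp] at hp
  have hunit : IsUnit (x * e + 1 - e) := by
    set m := B 1 with hm
    have hm1 : 1 ≤ m.factorial := Nat.one_le_iff_ne_zero.2 (Nat.factorial_ne_zero m)
    set q := m.factorial - 1 with hq
    have hqk : q + 1 = m.factorial := Nat.sub_add_cancel hm1
    set w := x ^ q * e + 1 - e with hw
    have hprod : (x * e + 1 - e) * w = x ^ (q + 1) * e + 1 - e := by
      rw [hw]
      linear_combination (x ^ (q + 1) - x - x ^ q + 1) * he2
    have hin : (x * e + 1 - e) * w - 1 ∈ I 1 := by
      rw [hprod, hqk]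
      have hi2 : x ^ m.factorial * e + 1 - e - 1 = (x ^ m.factorial - e) * e + (e * e - e) := by
        ring
      rw [hi2, he2, sub_self, add_zero]
      exact Ideal.mul_mem_right _ _ (hconv 1 m (le_refl _))
    obtain ⟨a, ha⟩ := Ideal.mem_span_singleton'.1 hin
    have hj : (x * e + 1 - e) * w - 1 ∈ Ideal.jacobson (⊥ : Ideal H) := by
      rw [← ha, pow_one]
      exact Ideal.mul_mem_left _ _ pjac
    have hiu : IsUnit ((x * e + 1 - e) * w) := by
      have h := Ideal.mem_jacobson_bot.1 hj 1
      rw [mul_one] at h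
      simpa using h
    exact isUnit_of_mul_isUnit_left hiu
  refine ⟨e, he2, ?_, ?_⟩
  · intro n
    rw [eventually_atTop]
    exact ⟨B n, fun m hm => hconv n m hm⟩
  · intro M iM jM kM
    obtain ⟨U, hU⟩ := hunit
    set E := LinearMap.range (LinearMap.lsmul H M e) with hE
    have hmemE : ∀ v : M, v ∈ E ↔ e • v = v := by
      intro v
      constructor
      · rintro ⟨u, rfl⟩
        show e • (e • u) = e • u
        rw [← mul_smul, he2]
      · intro h
        exact ⟨v, h⟩
    have hxu : ∀ v : M, v ∈ E → x • v = (x * e + 1 - e) • v := by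
      intro v hv
      rw [hmemE] at hv
      rw [sub_smul, add_smul, mul_smul, one_smul, hv]
      simp
    constructor
    · constructor
      · intro v₁ v₂ hvv
        have h12 : x • (v₁ : M) = x • (v₂ : M) := congrArg Subtype.val hvv
        rw [hxu _ v₁.2, hxu _ v₂.2] at h12
        have h13 : (((U⁻¹ : Hˣ) : H) * (x * e + 1 - e)) • (v₁ : M)
            = (((U⁻¹ : Hˣ) : H) * (x * e + 1 - e)) • (v₂ : M) := by
          rw [mul_smul, mul_smul, h12]
        rw [← hU, Units.inv_mul, one_smul, one_smul] at h13
        exact Subtype.ext h13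
      · rintro ⟨v, hv⟩
        refine ⟨⟨e • (((U⁻¹ : Hˣ) : H) • v), ⟨_, rfl⟩⟩, ?_⟩
        apply Subtype.ext
        show x • (e • (((U⁻¹ : Hˣ) : H) • v)) = v
        have hwE : (e • (((U⁻¹ : Hˣ) : H) • v)) ∈ E := ⟨_, rfl⟩
        rw [hxu _ hwE, ← mul_smul, ← mul_smul]
        have hcomm : (x * e + 1 - e) * e * ((U⁻¹ : Hˣ) : H)
            = e * ((x * e + 1 - e) * ((U⁻¹ : Hˣ) : H)) := by ring
        rw [hcomm, ← hU, Units.mul_inv, mul_one]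
        exact (hmemE v).1 hv
    · intro N hN
      intro v hv
      letI : Module ℤ_[p] M := Module.compHom M (algebraMap ℤ_[p] H)
      haveI : IsScalarTower ℤ_[p] H M := ⟨fun cc h mm => by
        show (cc • h) • mm = (algebraMap ℤ_[p] H cc) • (h • mm)
        rw [Algebra.smul_def, mul_smul]⟩
      haveI : Module.Finite ℤ_[p] M := Module.Finite.trans H M
      have iter : ∀ kk : ℕ, ∃ w, ∃ hw : w ∈ N, x ^ kk • w = v := by
        intro kk
        induction kk with
        | zero => exact ⟨v, hv, by simp⟩
        | succ kk ih =>
          obtain ⟨w, hw, hwv⟩ := ih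
          obtain ⟨w', hw'⟩ := hN.2 ⟨w, hw⟩
          refine ⟨w', w'.2, ?_⟩
          have hxw : x • (w' : M) = w := congrArg Subtype.val hw'
          rw [pow_succ, mul_smul, hxw, hwv]
      have hsep : ∀ n : ℕ,
          v - e • v ∈ ((Ideal.span {(p : ℤ_[p])}) ^ n • ⊤ : Submodule ℤ_[p] M) := by
        intro n
        obtain ⟨w, hwN, hwv⟩ := iter ((B n).factorial)
        have hyI : (1 - e) * x ^ (B n).factorial ∈ I n := by
          have h1 := heI n
          have hrw : (1 - e) * x ^ (B n).factorial
              = (x ^ (B n).factorial - e) - e * (x ^ (B n).factorial - e) - (e * e - e) := by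
            ring
          rw [hrw, he2, sub_self, sub_zero]
          exact Ideal.sub_mem _ h1 (Ideal.mul_mem_left _ _ h1)
        obtain ⟨a, ha⟩ := Ideal.mem_span_singleton'.1 hyI
        have hveq : v - e • v = ((1 - e) * x ^ (B n).factorial) • w := by
          rw [mul_smul, hwv, sub_smul, one_smul]
        rw [hveq, ← ha]
        have halgp : (algebraMap ℤ_[p] H) (((p : ℕ) : ℤ_[p]) ^ n) = (p : H) ^ n := by
          rw [map_pow]
          congr 1
          exact map_natCast _ p
        have hps : (a * (p : H) ^ n) • w = ((p : ℤ_[p]) ^ n) • (a • w) := by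
          rw [mul_comm, mul_smul, ← halgp, algebraMap_smul]
        rw [hps, Ideal.span_singleton_pow]
        exact Submodule.smul_mem_smul (Ideal.mem_span_singleton_self _) trivial
      have hker := auxSep' p M (v - e • v) hsep
      have hev : e • v = v := by
        have := sub_eq_zero.1 hker
        exact this.symm
      exact (hmemE v).2 hev

/-- Let `A` be the ring of integers in a finite extension `K` of `ℚ_p` (i.e. the
integral closure of `ℤ_p` in `K`) and `H` a commutative finite `A`-algebra.
For every `x ∈ H` the sequence `x^{m!}` converges `p`-adically in `H` to an
idempotent `e_x`, and for every finite `H`-module `M`, `e_x M` is the largest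
`H`-submodule of `M` on which multiplication by `x` is bijective. -/
theorem exists_ordinary_idempotent (p : ℕ) [Fact p.Prime]
    (K : Type*) [Field K] [Algebra ℚ_[p] K] [FiniteDimensional ℚ_[p] K]
    [Algebra ℤ_[p] K] [IsScalarTower ℤ_[p] ℚ_[p] K]
    (H : Type*) [CommRing H] [Algebra (integralClosure ℤ_[p] K) H]
    [Module.Finite (integralClosure ℤ_[p] K) H] (x : H) :
    ∃ e : H, IsIdempotentElem e ∧
      (∀ n : ℕ, ∀ᶠ m in atTop, x ^ (Nat.factorial m) - e ∈ Ideal.span {(p : H) ^ n}) ∧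
      ∀ (M : Type) (_ : AddCommGroup M) (_ : Module H M) (_ : Module.Finite H M),
        IsGreatest
          {N : Submodule H M |
            Function.Bijective fun v : N => (⟨x • (v : M), N.smul_mem x v.2⟩ : N)}
          (LinearMap.range (LinearMap.lsmul H M e)) := by
  letI : Algebra ℤ_[p] H :=
    ((algebraMap (integralClosure ℤ_[p] K) H).comp
      (algebraMap ℤ_[p] (integralClosure ℤ_[p] K))).toAlgebra
  letI : IsScalarTower ℤ_[p] (integralClosure ℤ_[p] K) H :=
    IsScalarTower.of_algebraMap_eq (fun c => rfl)
  haveI : Module.Finite ℤ_[p] (integralClosure ℤ_[p] K) :=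
    IsIntegralClosure.finite ℤ_[p] ℚ_[p] K (integralClosure ℤ_[p] K)
  haveI : Module.Finite ℤ_[p] H := Module.Finite.trans (integralClosure ℤ_[p] K) H
  exact mainAux p H x
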